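/- Let π : X̃→X, with deck group Γ, be a regular covering of a connected, locally finite weighted graph (X,b,m) in which every fiber π⁻¹(x) has exactly n elements. Let p̃ : [0,∞)×X̃×X̃→ℝ be Γ-invariant (p̃_t(γ(ã),γ(b̃))=p̃_t(ã,b̃) for all γ∈Γ) and positive semidefinite in the sense that ∑_{ã,b̃∈X̃} p̃_t(ã,b̃)·f(ã)·f(b̃)·m̃(ã)·m̃(b̃) ≥ 0 for every finitely supported f : X̃→ℝ and every t≥0, and let p : [0,∞)×X×X→ℝ satisfy p_t(x,y) = ∑_{ỹ∈π⁻¹(y)} p̃_t(x̃,ỹ) for all x̃∈π⁻¹(x). Then for every t≥0, x∈X and x̃∈π⁻¹(x): p_t(x,x) ≤ n·p̃_t(x̃,x̃). -/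

import Mathlib

open Filter Topology

/-- A function on a countable set vanishes at infinity if, for every `ε > 0`,
the set where `|f| ≥ ε` is finite. -/
def VanishesAtInfty {V : Type*} (f : V → ℝ) : Prop :=
  ∀ ε > (0 : ℝ), {x | ε ≤ |f x|}.Finite

/-- `(X, b, m)` is a weighted graph: nonnegative symmetric edge weight with vanishing
diagonal, locally finite, positive measure, connected. -/
def IsWeightedGraph {V : Type*} (b : V → V → ℝ) (m : V → ℝ) : Prop :=
  (∀ x y, 0 ≤ b x y) ∧ (∀ x y, b x y = b y x) ∧ (∀ x, b x x = 0) ∧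
    (∀ x, {y | 0 < b x y}.Finite) ∧ (∀ x, 0 < m x) ∧
    (∀ x y, Relation.ReflTransGen (fun a c => 0 < b a c) x y)

/-- The formal graph Laplacian `𝓛f(x) = (1/m x) ∑_y b x y (f x − f y)`. -/
noncomputable def lap {V : Type*} (b : V → V → ℝ) (m : V → ℝ) (f : V → ℝ) (x : V) : ℝ :=
  (1 / m x) * ∑' y, b x y * (f x - f y)

/-- The weighted degree `Deg(x) = (1/m x) ∑_y b x y`. -/
noncomputable def deg {V : Type*} (b : V → V → ℝ) (m : V → ℝ) (x : V) : ℝ :=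
  (1 / m x) * ∑' y, b x y

/-- `π : (X̃, b̃, m̃) → (X, b, m)` is a regular covering of weighted graphs with deck
transformation group `Γ`: `π` is surjective, maps the neighbourhood of each `x̃`
bijectively onto the neighbourhood of `π x̃`, the weights and measures are compatible,
every `γ ∈ Γ` is an automorphism over `π`, and `Γ` acts transitively on each fiber. -/
def IsRegularCovering {X Xc : Type*} (b : X → X → ℝ) (m : X → ℝ)
    (bc : Xc → Xc → ℝ) (mc : Xc → ℝ) (π : Xc → X)
    (Γ : Subgroup (Equiv.Perm Xc)) : Prop :=
  Function.Surjective π ∧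
    (∀ xc, Set.BijOn π {yc | 0 < bc xc yc} {y | 0 < b (π xc) y}) ∧
    (∀ xc yc, 0 < bc xc yc → bc xc yc = b (π xc) (π yc)) ∧
    (∀ xc, mc xc = m (π xc)) ∧
    (∀ γ ∈ Γ, ∀ xc, π (γ xc) = π xc) ∧
    (∀ γ ∈ Γ, ∀ xc yc, bc (γ xc) (γ yc) = bc xc yc) ∧
    (∀ xc yc, π xc = π yc → ∃ γ ∈ Γ, γ xc = yc)

/-- For a regular covering with `n` sheets, a `Γ`-invariant positive semidefinite kernel
`p̃` on the cover and the fiber-sum kernel `p` on the base satisfy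
`p_t(x,x) ≤ n·p̃_t(x̃,x̃)` for every `x̃ ∈ π⁻¹(x)`. -/
theorem stmt12 {X Xc : Type*} [Countable X] [Countable Xc]
    (b : X → X → ℝ) (m : X → ℝ) (bc : Xc → Xc → ℝ) (mc : Xc → ℝ)
    (π : Xc → X) (Γ : Subgroup (Equiv.Perm Xc))
    (hwg : IsWeightedGraph b m) (hwgc : IsWeightedGraph bc mc)
    (hcov : IsRegularCovering b m bc mc π Γ)
    (n : ℕ) (hn : 0 < n)
    (hfib : ∀ x : X, {yc : Xc | π yc = x}.Finite ∧ {yc : Xc | π yc = x}.ncard = n)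
    (pc : ℝ → Xc → Xc → ℝ) (p : ℝ → X → X → ℝ)
    (hinv : ∀ γ ∈ Γ, ∀ t, 0 ≤ t → ∀ a c, pc t (γ a) (γ c) = pc t a c)
    (hpsd : ∀ t, 0 ≤ t → ∀ f : Xc → ℝ, (Function.support f).Finite →
      0 ≤ ∑' a, ∑' c, pc t a c * f a * f c * mc a * mc c)
    (hid : ∀ t, 0 ≤ t → ∀ (x y : X) (xc : Xc), π xc = x →
      p t x y = ∑' yc : {yc : Xc // π yc = y}, pc t xc yc.1) :
    ∀ t, 0 ≤ t → ∀ (x : X) (xc : Xc), π xc = x →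
      p t x x ≤ n * pc t xc xc := by
  intro t ht x xc hxc
  classical
  obtain ⟨hsurj, hbij, hbw, hmeq, hπγ, hbγ, htrans⟩ := hcov
  obtain ⟨hbc0, hbcsym, hbcdiag, hbcfin, hmc0, hconn⟩ := hwgc
  -- Γ acts freely: a deck transformation fixing a point is the identity
  have hfree : ∀ γ ∈ Γ, ∀ z, γ z = z → ∀ w, γ w = w := by
    intro γ hγ z hz w
    induction hconn z w with
    | refl => exact hz
    | @tail u v _ hstep ih =>
      have e : bc u (γ v) = bc u v := by
        conv_lhs => rw [← ih]
        exact hbγ γ hγ u v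
      have h1 : 0 < bc u (γ v) := by rw [e]; exact hstep
      exact (hbij u).injOn h1 hstep (hπγ γ hγ v)
  have hext : ∀ γ ∈ Γ, ∀ δ ∈ Γ, ∀ z, γ z = δ z → γ = δ := by
    intro γ hγ δ hδ z hzz
    have hm' : δ⁻¹ * γ ∈ Γ := mul_mem (inv_mem hδ) hγ
    have hz : (δ⁻¹ * γ) z = z := by
      rw [Equiv.Perm.mul_apply, hzz]; exact Equiv.symm_apply_apply δ z
    ext w
    have hw := hfree _ hm' z hz w
    rw [Equiv.Perm.mul_apply] at hw
    have := congrArg δ hw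
    rwa [Equiv.Perm.coe_inv, Equiv.apply_symm_apply] at this
  -- the fiber over x as a Finset
  set Sfin := (hfib x).1.toFinset with hS
  have hmemS : ∀ a, a ∈ Sfin ↔ π a = x := by
    intro a; rw [hS, Set.Finite.mem_toFinset]; rfl
  have hxcS : xc ∈ Sfin := (hmemS xc).2 hxc
  have hcardS : Sfin.card = n := by
    rw [hS, ← Set.ncard_eq_toFinset_card _ (hfib x).1]; exact (hfib x).2
  have hnR : (0:ℝ) < n := by exact_mod_cast hn
  -- tsum over the fiber equals the finite sum
  have htsum : ∀ a : Xc, ∑' (yc : {yc : Xc // π yc = x}), pc t a yc.1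
      = ∑ c ∈ Sfin, pc t a c := by
    intro a
    rw [show (∑' (yc : {yc : Xc // π yc = x}), pc t a yc.1)
        = ∑' (yc : {yc : Xc | π yc = x}), pc t a yc.1 from rfl,
      tsum_subtype ({yc : Xc | π yc = x}) (fun yc => pc t a yc),
      tsum_eq_sum (s := Sfin) (fun c hc =>
        Set.indicator_of_notMem (by simpa [hmemS] using hc) _)]
    exact Finset.sum_congr rfl fun c hc =>
      Set.indicator_of_mem (show c ∈ {yc : Xc | π yc = x} from (hmemS c).1 hc) _
  have hrow : ∀ a ∈ Sfin, ∑ c ∈ Sfin, pc t a c = p t x x := by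
    intro a ha
    rw [← htsum a]
    exact (hid t ht x x a ((hmemS a).1 ha)).symm
  -- column sum equals p t x x via the free transitive action
  have hsel : ∀ a : Xc, a ∈ Sfin → ∃ γ, γ ∈ Γ ∧ γ xc = a := by
    intro a ha
    obtain ⟨γ, h1, h2⟩ := htrans xc a (by rw [hxc, (hmemS a).1 ha])
    exact ⟨γ, h1, h2⟩
  choose γf hγfΓ hγfx using hsel
  have hφmem : ∀ (a : Xc) (h : a ∈ Sfin), (γf a h)⁻¹ xc ∈ Sfin := by
    intro a h
    rw [hmemS, hπγ _ (inv_mem (hγfΓ a h)) xc, hxc]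
  have hcol : ∑ a ∈ Sfin, pc t a xc = p t x x := by
    have key : ∑ a ∈ Sfin, pc t a xc = ∑ c ∈ Sfin, pc t xc c := by
      refine Finset.sum_nbij'
        (i := fun a => if h : a ∈ Sfin then (γf a h)⁻¹ xc else a)
        (j := fun a => if h : a ∈ Sfin then (γf a h)⁻¹ xc else a)
        (fun a ha => by simp only [dif_pos ha]; exact hφmem a ha)
        (fun a ha => by simp only [dif_pos ha]; exact hφmem a ha)
        ?_ ?_ ?_
      · intro a ha
        simp only [dif_pos ha, dif_pos (hφmem a ha)]
        have e : γf _ (hφmem a ha) = (γf a ha)⁻¹ :=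
          hext _ (hγfΓ _ (hφmem a ha)) _ (inv_mem (hγfΓ a ha)) xc (hγfx _ (hφmem a ha))
        rw [e, inv_inv, hγfx a ha]
      · intro a ha
        simp only [dif_pos ha, dif_pos (hφmem a ha)]
        have e : γf _ (hφmem a ha) = (γf a ha)⁻¹ :=
          hext _ (hγfΓ _ (hφmem a ha)) _ (inv_mem (hγfΓ a ha)) xc (hγfx _ (hφmem a ha))
        rw [e, inv_inv, hγfx a ha]
      · intro a ha
        simp only [dif_pos ha]
        have h1 := hinv ((γf a ha)⁻¹) (inv_mem (hγfΓ a ha)) t ht a xc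
        have e2 : (γf a ha)⁻¹ a = xc := by
          rw [Equiv.Perm.inv_def, Equiv.symm_apply_eq]
          exact (hγfx a ha).symm
        rw [e2] at h1
        exact h1.symm
    rw [key]; exact hrow xc hxcS
  -- the test function
  set g : Xc → ℝ := fun a => (if a = xc then (1:ℝ) else 0) - 1/n with hg
  set f : Xc → ℝ := fun a => if π a = x then g a / mc a else 0 with hf
  have hfz : ∀ c ∉ Sfin, f c = 0 := by
    intro c hc
    rw [hf]
    exact if_neg (by simpa [hmemS] using hc)
  have hsupp : (Function.support f).Finite := by
    refine Set.Finite.subset (hfib x).1 ?_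
    intro a ha
    by_contra hne
    exact ha (hfz a (by simpa [hmemS] using hne))
  have hzero : ∀ a c, f a = 0 ∨ f c = 0 →
      pc t a c * f a * f c * mc a * mc c = 0 := by
    rintro a c (h | h) <;> simp [h]
  have hfm : ∀ a ∈ Sfin, f a * mc a = g a := by
    intro a ha
    rw [hf]
    simp only [if_pos ((hmemS a).1 ha)]
    exact div_mul_cancel₀ _ (hmc0 a).ne'
  have hQ := hpsd t ht f hsupp
  have hQ' : ∑' a, ∑' c, pc t a c * f a * f c * mc a * mc c
      = ∑ a ∈ Sfin, ∑ c ∈ Sfin, pc t a c * g a * g c := by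
    rw [tsum_eq_sum (s := Sfin) (f := fun a => ∑' c, pc t a c * f a * f c * mc a * mc c)
      (fun a ha => by
        have h0 : ∀ c, pc t a c * f a * f c * mc a * mc c = 0 :=
          fun c => hzero a c (Or.inl (hfz a ha))
        show (∑' c, pc t a c * f a * f c * mc a * mc c) = 0
        rw [tsum_congr h0, tsum_zero])]
    refine Finset.sum_congr rfl fun a ha => ?_
    rw [tsum_eq_sum (s := Sfin) (fun c hc => hzero a c (Or.inr (hfz c hc)))]
    refine Finset.sum_congr rfl fun c hc => ?_
    rw [show pc t a c * f a * f c * mc a * mc c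
        = pc t a c * (f a * mc a) * (f c * mc c) by ring,
      hfm a ha, hfm c hc]
  have hsumg : ∑ a ∈ Sfin, g a = 0 := by
    rw [hg]
    rw [Finset.sum_sub_distrib, Finset.sum_ite_eq' Sfin xc (fun _ => (1:ℝ))]
    rw [if_pos hxcS, Finset.sum_const, hcardS, nsmul_eq_mul]
    field_simp
    ring
  have hinner : ∀ a ∈ Sfin, ∑ c ∈ Sfin, pc t a c * g c
      = pc t a xc - p t x x / n := by
    intro a ha
    have e1 : ∀ c, pc t a c * g c
        = (if c = xc then pc t a c else 0) - pc t a c * (1/n) := by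
      intro c
      rw [hg]
      by_cases h : c = xc <;> simp [h] <;> ring
    rw [Finset.sum_congr rfl fun c _ => e1 c, Finset.sum_sub_distrib,
      Finset.sum_ite_eq' Sfin xc (fun c => pc t a c), if_pos hxcS,
      ← Finset.sum_mul, hrow a ha]
    ring
  have houter : ∑ a ∈ Sfin, ∑ c ∈ Sfin, pc t a c * g a * g c
      = pc t xc xc - p t x x / n := by
    have e1 : ∀ a ∈ Sfin, ∑ c ∈ Sfin, pc t a c * g a * g c
        = g a * (pc t a xc - p t x x / n) := by
      intro a ha
      rw [show ∑ c ∈ Sfin, pc t a c * g a * g c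
          = g a * ∑ c ∈ Sfin, pc t a c * g c by
        rw [Finset.mul_sum]; exact Finset.sum_congr rfl fun c _ => by ring,
        hinner a ha]
    rw [Finset.sum_congr rfl e1]
    have e2 : ∀ a ∈ Sfin, g a * (pc t a xc - p t x x / n)
        = ((if a = xc then pc t a xc else 0) - pc t a xc * (1/n))
          - g a * (p t x x / n) := by
      intro a ha
      rw [hg]
      by_cases h : a = xc <;> simp [h] <;> ring
    rw [Finset.sum_congr rfl e2, Finset.sum_sub_distrib, Finset.sum_sub_distrib,
      Finset.sum_ite_eq' Sfin xc (fun a => pc t a xc), if_pos hxcS,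
      ← Finset.sum_mul, hcol, ← Finset.sum_mul, hsumg]
    ring
  rw [hQ', houter] at hQ
  have : p t x x / n ≤ pc t xc xc := by linarith
  calc p t x x = (p t x x / n) * n := by field_simp
    _ ≤ pc t xc xc * n := by
        exact mul_le_mul_of_nonneg_right this (le_of_lt hnR)
    _ = n * pc t xc xc := by ring
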